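/- Assume the standing hypotheses with $C_{\phi,w}$ densely defined and $\alpha\in(0,1]$. Then $\Delta_\alpha(C_{\phi,w})\subseteq C_{\phi,w_\alpha}$ where $w_\alpha=w\cdot(\mathsf{h}_{\phi,w}/(\mathsf{h}_{\phi,w}\circ\phi))^{\alpha/2}$; in particular $\Delta_\alpha(C_{\phi,w})$ is closable and its closure equals $C_{\phi,w_\alpha}$. -/

import Mathlib

open MeasureTheory ENNReal NNReal Filter Topology

variable {X : Type*} [MeasurableSpace X]

/-- The measure `μ_w` with density `|w|²` with respect to `μ`. -/
noncomputable def wcMeasure (μ : Measure X) (w : X → ℂ) : Measure X :=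
  μ.withDensity fun x => (‖w x‖₊ : ℝ≥0∞) ^ 2

/-- The Radon–Nikodym derivative `h_{φ,w} = d(μ_w ∘ φ⁻¹)/dμ`. -/
noncomputable def wcDeriv (μ : Measure X) (w : X → ℂ) (φ : X → X) : X → ℝ≥0∞ :=
  ((wcMeasure μ w).map φ).rnDeriv μ

/-- The modified weight `w_α = w · (h_{φ,w}/(h_{φ,w}∘φ))^{α/2}` (interpreted a.e.). -/
noncomputable def wcAlpha (μ : Measure X) (w : X → ℂ) (φ : X → X) (α : ℝ) : X → ℂ :=
  fun x => w x * (((wcDeriv μ w φ x / wcDeriv μ w φ (φ x)) ^ (α / 2)).toReal : ℂ)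

/-- `E` is (a version of) the conditional expectation of the nonnegative function `f`
with respect to the σ-algebra `φ⁻¹(𝒜)` and the measure `ν`. -/
def IsCondExp (φ : X → X) (ν : Measure X) (f E : X → ℝ≥0∞) : Prop :=
  Measurable[MeasurableSpace.comap φ inferInstance] E ∧
    ∀ s : Set X, MeasurableSet s → ∫⁻ x in φ ⁻¹' s, E x ∂ν = ∫⁻ x in φ ⁻¹' s, f x ∂ν

/-- `g = E ∘ φ⁻¹`: the measurable function with `g ∘ φ = E` a.e. `[ν]`,
vanishing a.e. `[μ]` on the set where `h = 0`. -/
def IsQuot (φ : X → X) (μ ν : Measure X) (h : X → ℝ≥0∞) (E g : X → ℝ≥0∞) : Prop :=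
  Measurable g ∧ (∀ᵐ x ∂ν, g (φ x) = E x) ∧ (∀ᵐ x ∂μ, h x = 0 → g x = 0)

/-- `E` is (a version of) the conditional expectation of the complex function `f`
with respect to the σ-algebra `φ⁻¹(𝒜)` and the measure `ν`. -/
def IsCondExpC (φ : X → X) (ν : Measure X) (f E : X → ℂ) : Prop :=
  Measurable[MeasurableSpace.comap φ inferInstance] E ∧
    ∀ s : Set X, MeasurableSet s → ν (φ ⁻¹' s) < ⊤ →
      ∫ x in φ ⁻¹' s, E x ∂ν = ∫ x in φ ⁻¹' s, f x ∂ν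

/-- `f_w = χ_{{w ≠ 0}} f / w`. -/
noncomputable def fw (w f : X → ℂ) : X → ℂ := fun x => if w x = 0 then 0 else f x / w x

/-- The weight `w̃ = w/(h_{φ,w}∘φ)^{1/2}` of the partial isometry in the polar
decomposition `C_{φ,w} = U |C_{φ,w}|`, `U = C_{φ,w̃}`. -/
noncomputable def wcTilde (μ : Measure X) (w : X → ℂ) (φ : X → X) : X → ℂ :=
  fun x => w x * (((wcDeriv μ w φ (φ x)) ^ (-(1 / 2) : ℝ)).toReal : ℂ)

/-- The function `Δ_α(C_{φ,w}) f = |C_{φ,w}|^α U |C_{φ,w}|^{1-α} f`, computed via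
`|C_{φ,w}| = M_{h^{1/2}}` and `U = C_{φ,w̃}`. -/
noncomputable def aluthgeFun (μ : Measure X) (w : X → ℂ) (φ : X → X) (α : ℝ) (f : X → ℂ) :
    X → ℂ :=
  fun x => ((wcDeriv μ w φ x ^ (α / 2)).toReal : ℂ) *
    (wcTilde μ w φ x * (((wcDeriv μ w φ (φ x)) ^ ((1 - α) / 2)).toReal : ℂ) * f (φ x))

/-- Membership in the domain of the Aluthge transform
`Δ_α(C_{φ,w}) = |C_{φ,w}|^α U |C_{φ,w}|^{1-α}`. -/
noncomputable def aluthgeDom (μ : Measure X) (w : X → ℂ) (φ : X → X) (α : ℝ) (f : X → ℂ) :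
    Prop :=
  MemLp f 2 μ ∧
  MemLp (fun x => ((wcDeriv μ w φ x ^ ((1 - α) / 2)).toReal : ℂ) * f x) 2 μ ∧
  MemLp (fun x =>
    wcTilde μ w φ x * (((wcDeriv μ w φ (φ x)) ^ ((1 - α) / 2)).toReal : ℂ) * f (φ x)) 2 μ ∧
  MemLp (aluthgeFun μ w φ α f) 2 μ

namespace AluthgeAux

lemma hmeas (μ : Measure X) (w : X → ℂ) (φ : X → X) : Measurable (wcDeriv μ w φ) :=
  Measure.measurable_rnDeriv _ _

lemma meas_w2 {w : X → ℂ} (hw : Measurable w) :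
    Measurable fun x => (‖w x‖₊ : ℝ≥0∞) ^ 2 :=
  (hw.nnnorm.coe_nnreal_ennreal).pow_const 2

lemma cv (μ : Measure X) [SigmaFinite μ] {w : X → ℂ} {φ : X → X}
    (hw : Measurable w) (hφ : Measurable φ)
    (habs : (wcMeasure μ w).map φ ≪ μ) {g : X → ℝ≥0∞} (hg : Measurable g) :
    ∫⁻ x, (‖w x‖₊ : ℝ≥0∞) ^ 2 * g (φ x) ∂μ = ∫⁻ x, wcDeriv μ w φ x * g x ∂μ := by
  haveI : SFinite (wcMeasure μ w) := by unfold wcMeasure; infer_instance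
  have h1 : ∫⁻ x, wcDeriv μ w φ x * g x ∂μ = ∫⁻ x, g x ∂((wcMeasure μ w).map φ) := by
    simp only [wcDeriv]
    conv_rhs => rw [← Measure.withDensity_rnDeriv_eq _ _ habs]
    rw [lintegral_withDensity_eq_lintegral_mul μ (Measure.measurable_rnDeriv _ _) hg]
    rfl
  rw [h1, lintegral_map hg hφ, wcMeasure,
    lintegral_withDensity_eq_lintegral_mul μ (meas_w2 hw)
      (show Measurable fun x => g (φ x) from hg.comp hφ)]
  rfl

lemma rpow_two' (z : ℝ≥0∞) : z ^ (2:ℝ) = z ^ (2:ℕ) := by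
  rw [← ENNReal.rpow_natCast]; norm_num

lemma eLpNorm_two (μ : Measure X) (g : X → ℂ) :
    eLpNorm g 2 μ = (∫⁻ x, (‖g x‖₊ : ℝ≥0∞) ^ 2 ∂μ) ^ (1/2 : ℝ) := by
  rw [eLpNorm_eq_lintegral_rpow_enorm_toReal two_ne_zero ENNReal.ofNat_ne_top]
  norm_num [rpow_two', enorm_eq_nnnorm]

lemma lint_lt_top {μ : Measure X} {g : X → ℂ} (hg : MemLp g 2 μ) :
    ∫⁻ x, (‖g x‖₊ : ℝ≥0∞) ^ 2 ∂μ < ∞ := by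
  have h := hg.2
  rw [eLpNorm_two] at h
  rw [lt_top_iff_ne_top]
  intro htop
  rw [htop, ENNReal.top_rpow_of_pos (by norm_num)] at h
  exact absurd h (lt_irrefl _)

lemma mem_of {μ : Measure X} {g : X → ℂ} (hg : AEStronglyMeasurable g μ)
    (hint : ∫⁻ x, (‖g x‖₊ : ℝ≥0∞) ^ 2 ∂μ < ∞) : MemLp g 2 μ :=
  ⟨hg, by rw [eLpNorm_two]; exact ENNReal.rpow_lt_top_of_nonneg (by norm_num) hint.ne⟩

lemma key_pt {α : ℝ} (hα0 : 0 < α) (hα1 : α ≤ 1) {a b : ℝ≥0∞} (hb : b ≠ ∞) :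
    (b ^ (α/2)).toReal * ((a ^ (-(1/2):ℝ)).toReal * (a ^ ((1-α)/2)).toReal)
      = ((b/a) ^ (α/2)).toReal := by
  rcases eq_or_ne a 0 with rfl | ha0
  · rw [ENNReal.zero_rpow_of_neg (by norm_num : (-(1/2):ℝ) < 0), ENNReal.toReal_top,
      zero_mul, mul_zero]
    rcases eq_or_ne b 0 with rfl | hb0
    · rw [ENNReal.zero_div, ENNReal.zero_rpow_of_pos (by linarith), ENNReal.toReal_zero]
    · rw [ENNReal.div_zero hb0, ENNReal.top_rpow_of_pos (by linarith), ENNReal.toReal_top]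
  rcases eq_or_ne a ∞ with rfl | hatop
  · rw [ENNReal.top_rpow_of_neg (by norm_num : (-(1/2):ℝ) < 0), ENNReal.toReal_zero,
      zero_mul, mul_zero, ENNReal.div_top, ENNReal.zero_rpow_of_pos (by linarith),
      ENNReal.toReal_zero]
  have hA : 0 < a.toReal := ENNReal.toReal_pos ha0 hatop
  simp only [← ENNReal.toReal_rpow]
  rw [ENNReal.toReal_div]
  rw [Real.div_rpow ENNReal.toReal_nonneg ENNReal.toReal_nonneg]
  rw [← Real.rpow_add hA]
  have hexp : (-(1/2) + (1-α)/2 : ℝ) = -(α/2) := by ring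
  rw [hexp, Real.rpow_neg ENNReal.toReal_nonneg, ← div_eq_mul_inv]

lemma key_ae (μ : Measure X) {w : X → ℂ} {φ : X → X}
    (hw : Measurable w) (hφ : Measurable φ)
    (habs : (wcMeasure μ w).map φ ≪ μ) {β : Type*} {g g' : X → β}
    (hgg' : g =ᵐ[μ] g') : ∀ᵐ x ∂μ, w x = 0 ∨ g (φ x) = g' (φ x) := by
  set N := toMeasurable μ {x | g x ≠ g' x} with hNdef
  have hN : MeasurableSet N := measurableSet_toMeasurable _ _
  have hμN : μ N = 0 := by
    rw [hNdef, measure_toMeasurable]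
    exact hgg'
  have h2 : ((wcMeasure μ w).map φ) N = 0 := habs hμN
  rw [Measure.map_apply hφ hN, wcMeasure, withDensity_apply _ (hφ hN)] at h2
  have h3 := (setLIntegral_eq_zero_iff (hφ hN) (meas_w2 hw)).1 h2
  filter_upwards [h3] with x hx
  by_cases hmem : φ x ∈ N
  · left
    have := hx hmem
    simpa using this
  · right
    by_contra hne
    exact hmem (subset_toMeasurable _ _ hne)

end AluthgeAux

namespace AluthgeAux2

lemma Dle {α : ℝ} (hα0 : 0 < α) (hα1 : α ≤ 1) {a : ℝ≥0∞} {n : ℕ}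
    (ha : a = 0 ∨ ((n : ℝ≥0∞) + 1)⁻¹ ≤ a) :
    (a ^ (-(1/2) : ℝ)).toReal * (a ^ ((1-α)/2)).toReal
      ≤ (((n : ℝ≥0∞) + 1) ^ (α/2)).toReal := by
  have e := AluthgeAux.key_pt hα0 hα1 (a := a) (b := (1:ℝ≥0∞)) ENNReal.one_ne_top
  rw [ENNReal.one_rpow, ENNReal.toReal_one, one_mul] at e
  rw [e]
  rcases ha with rfl | hle
  · rw [ENNReal.div_zero one_ne_zero, ENNReal.top_rpow_of_pos (by linarith), ENNReal.toReal_top]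
    exact ENNReal.toReal_nonneg
  · have h1 : (1:ℝ≥0∞) / a ≤ (n : ℝ≥0∞) + 1 := by
      rw [one_div, ← inv_inv ((n : ℝ≥0∞) + 1)]
      exact ENNReal.inv_le_inv.mpr hle
    exact ENNReal.toReal_mono
      (ENNReal.rpow_ne_top_of_nonneg (by linarith)
        (ENNReal.add_ne_top.mpr ⟨ENNReal.natCast_ne_top n, ENNReal.one_ne_top⟩))
      (ENNReal.rpow_le_rpow h1 (by linarith))

lemma c1le {α : ℝ} (hα0 : 0 < α) (hα1 : α ≤ 1) {a : ℝ≥0∞} {n : ℕ}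
    (ha : a = 0 ∨ a ≤ (n : ℝ≥0∞) + 1) :
    (a ^ ((1-α)/2)).toReal ≤ (((n : ℝ≥0∞) + 1) ^ ((1-α)/2)).toReal + 1 := by
  rcases ha with rfl | hle
  · rcases eq_or_lt_of_le (by linarith : (0:ℝ) ≤ (1-α)/2) with h | h
    · rw [← h, ENNReal.rpow_zero, ENNReal.toReal_one]
      norm_num
    · rw [ENNReal.zero_rpow_of_pos h, ENNReal.toReal_zero]
      have h2 : (0:ℝ) ≤ (((n : ℝ≥0∞) + 1) ^ ((1-α)/2)).toReal := ENNReal.toReal_nonneg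
      linarith
  · have h2 := ENNReal.toReal_mono
      (ENNReal.rpow_ne_top_of_nonneg (by linarith)
        (ENNReal.add_ne_top.mpr ⟨ENNReal.natCast_ne_top n, ENNReal.one_ne_top⟩))
      (ENNReal.rpow_le_rpow hle (by linarith : (0:ℝ) ≤ (1-α)/2))
    linarith

lemma tendsto_eLpNorm_zero {X : Type*} [MeasurableSpace X] {μ : Measure X} {G : ℕ → X → ℂ}
    (hG : ∀ n, AEStronglyMeasurable (G n) μ) (bound : X → ℝ≥0∞)
    (hbfin : ∫⁻ x, bound x ∂μ ≠ ∞)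
    (hbd : ∀ n, ∀ᵐ x ∂μ, (‖G n x‖₊ : ℝ≥0∞) ^ 2 ≤ bound x)
    (hlim : ∀ᵐ x ∂μ, Tendsto (fun n => G n x) atTop (𝓝 0)) :
    Tendsto (fun n => eLpNorm (G n) 2 μ) atTop (𝓝 0) := by
  have hc : Continuous fun z : ℂ => ((‖z‖₊ ^ 2 : ℝ≥0) : ℝ≥0∞) :=
    ENNReal.continuous_coe.comp (continuous_nnnorm.pow 2)
  have h1 : Tendsto (fun n => ∫⁻ x, (‖G n x‖₊ : ℝ≥0∞) ^ 2 ∂μ) atTop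
      (𝓝 (∫⁻ _, (0:ℝ≥0∞) ∂μ)) := by
    refine tendsto_lintegral_of_dominated_convergence' bound
      (fun n => (hG n).aemeasurable.nnnorm.coe_nnreal_ennreal.pow_const 2) hbd hbfin ?_
    filter_upwards [hlim] with x hx
    have h5 := (hc.tendsto 0).comp hx
    simpa [ENNReal.coe_pow, Function.comp_def] using h5
  rw [lintegral_zero] at h1
  have h2 := (ENNReal.continuous_rpow_const (y := (1/2 : ℝ))).tendsto (0 : ℝ≥0∞)
  rw [ENNReal.zero_rpow_of_pos (by norm_num)] at h2
  have h3 := h2.comp h1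
  have heq : (fun n => eLpNorm (G n) 2 μ)
      = (fun z : ℝ≥0∞ => z ^ (1/2 : ℝ)) ∘ fun n => ∫⁻ x, (‖G n x‖₊ : ℝ≥0∞) ^ 2 ∂μ := by
    funext n
    rw [AluthgeAux.eLpNorm_two]
    rfl
  rw [heq]
  exact h3

end AluthgeAux2

lemma AluthgeAux.fun_eq {X : Type*} [MeasurableSpace X] (μ : Measure X) (w : X → ℂ) (φ : X → X)
    {α : ℝ} (hα0 : 0 < α) (hα1 : α ≤ 1) (f : X → ℂ) {x : X}
    (hx : wcDeriv μ w φ x ≠ ∞) :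
    aluthgeFun μ w φ α f x = wcAlpha μ w φ α x * f (φ x) := by
  have e := AluthgeAux.key_pt hα0 hα1 (a := wcDeriv μ w φ (φ x)) hx
  simp only [aluthgeFun, wcTilde, wcAlpha]
  rw [← e]
  push_cast
  ring

/-- `Δ_α(C_{φ,w}) ⊆ C_{φ,w_α}`; moreover `Δ_α(C_{φ,w})` is closable with
closure `C_{φ,w_α}` (every `f` in the domain of the closed operator `C_{φ,w_α}` is a
graph-norm limit of elements of the domain of `Δ_α(C_{φ,w})`). -/
theorem aluthge_wco_transform_closure
    (μ : Measure X) [SigmaFinite μ] (w : X → ℂ) (φ : X → X)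
    (hw : Measurable w) (hφ : Measurable φ)
    (habs : (wcMeasure μ w).map φ ≪ μ)
    (hfin : ∀ᵐ x ∂μ, wcDeriv μ w φ x < ⊤)
    (α : ℝ) (hα : α ∈ Set.Ioc (0 : ℝ) 1) :
    (∀ f : X → ℂ, aluthgeDom μ w φ α f →
      (MemLp f 2 μ ∧ MemLp (fun x => wcAlpha μ w φ α x * f (φ x)) 2 μ) ∧
        aluthgeFun μ w φ α f =ᵐ[μ] fun x => wcAlpha μ w φ α x * f (φ x)) ∧
    (∀ f : X → ℂ, MemLp f 2 μ → MemLp (fun x => wcAlpha μ w φ α x * f (φ x)) 2 μ →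
      ∃ F : ℕ → X → ℂ, (∀ n, aluthgeDom μ w φ α (F n)) ∧
        Tendsto (fun n => eLpNorm (fun x => F n x - f x) 2 μ) atTop (𝓝 0) ∧
        Tendsto (fun n => eLpNorm
          (fun x => wcAlpha μ w φ α x * F n (φ x) - wcAlpha μ w φ α x * f (φ x)) 2 μ)
          atTop (𝓝 0)) := by
  obtain ⟨hα0, hα1⟩ := hα
  have H : Measurable (wcDeriv μ w φ) := AluthgeAux.hmeas μ w φ
  have heqf : ∀ f : X → ℂ,
      aluthgeFun μ w φ α f =ᵐ[μ] fun x => wcAlpha μ w φ α x * f (φ x) := by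
    intro f
    filter_upwards [hfin] with x hx
    exact AluthgeAux.fun_eq μ w φ hα0 hα1 f hx.ne
  have hαmeas : Measurable (wcAlpha μ w φ α) := by
    apply hw.mul
    exact Complex.measurable_ofReal.comp (((H.div (H.comp hφ)).pow_const _).ennreal_toReal)
  constructor
  · intro f hf
    simp only [aluthgeDom] at hf
    obtain ⟨hf1, -, -, hf4⟩ := hf
    exact ⟨⟨hf1, MemLp.ae_eq (heqf f) hf4⟩, heqf f⟩
  · intro f hfL hfαL
    classical
    set f' : X → ℂ := hfL.1.mk f with hf'def
    have hff' : f =ᵐ[μ] f' := hfL.1.ae_eq_mk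
    have hf'meas : Measurable f' := hfL.1.stronglyMeasurable_mk.measurable
    have hf'L : MemLp f' 2 μ := hfL.ae_eq hff'
    set E : ℕ → Set X := fun n =>
      wcDeriv μ w φ ⁻¹' ({0} ∪ Set.Icc ((n : ℝ≥0∞) + 1)⁻¹ ((n : ℝ≥0∞) + 1)) with hEdef
    have hEmeas : ∀ n, MeasurableSet (E n) := fun n =>
      H ((measurableSet_singleton 0).union measurableSet_Icc)
    have hEmem : ∀ n x, x ∈ E n ↔ (wcDeriv μ w φ x = 0 ∨
        (((n : ℝ≥0∞) + 1)⁻¹ ≤ wcDeriv μ w φ x ∧ wcDeriv μ w φ x ≤ (n : ℝ≥0∞) + 1)) := by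
      intro n x
      simp [hEdef, Set.mem_Icc]
    set F : ℕ → X → ℂ := fun n => (E n).indicator f' with hFdef
    have hFmeas : ∀ n, Measurable (F n) := fun n => hf'meas.indicator (hEmeas n)
    have hFf' : ∀ n x, x ∈ E n → F n x = f' x := fun n x hx => Set.indicator_of_mem hx f'
    have hFz : ∀ n x, x ∉ E n → F n x = 0 := fun n x hx => Set.indicator_of_notMem hx f'
    have evE : ∀ y, wcDeriv μ w φ y ≠ ∞ → ∀ᶠ n in atTop, y ∈ E n := by
      intro y hy
      by_cases h0 : wcDeriv μ w φ y = 0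
      · exact Eventually.of_forall fun n => (hEmem n y).2 (Or.inl h0)
      · obtain ⟨m, hm⟩ := ENNReal.exists_inv_nat_lt h0
        obtain ⟨k, hk⟩ := ENNReal.exists_nat_gt hy
        filter_upwards [eventually_ge_atTop m, eventually_ge_atTop k] with n hnm hnk
        refine (hEmem n y).2 (Or.inr ⟨le_trans ?_ hm.le, hk.le.trans ?_⟩)
        · exact ENNReal.inv_le_inv.mpr
            (le_trans (by exact_mod_cast hnm : (m : ℝ≥0∞) ≤ (n : ℝ≥0∞)) le_self_add)
        · exact le_trans (by exact_mod_cast hnk : (k : ℝ≥0∞) ≤ (n : ℝ≥0∞)) le_self_add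
    have mem1 : ∀ n, MemLp (F n) 2 μ := fun n =>
      MemLp.of_le hf'L (hFmeas n).aestronglyMeasurable
        (Eventually.of_forall fun x => norm_indicator_le_norm_self f' x)
    have mem2 : ∀ n,
        MemLp (fun x => ((wcDeriv μ w φ x ^ ((1-α)/2)).toReal : ℂ) * F n x) 2 μ := by
      intro n
      refine MemLp.of_le_mul (c := (((n : ℝ≥0∞) + 1) ^ ((1-α)/2)).toReal + 1) hf'L
        (((Complex.measurable_ofReal.comp
            ((H.pow_const _).ennreal_toReal)).mul (hFmeas n)).aestronglyMeasurable)
        (Eventually.of_forall fun x => ?_)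
      rw [norm_mul, Complex.norm_real, Real.norm_eq_abs,
        abs_of_nonneg ENNReal.toReal_nonneg]
      by_cases hx : x ∈ E n
      · rw [hFf' n x hx]
        have hb := AluthgeAux2.c1le hα0 hα1 (n := n) (a := wcDeriv μ w φ x)
          (((hEmem n x).1 hx).imp id And.right)
        exact mul_le_mul_of_nonneg_right hb (norm_nonneg _)
      · rw [hFz n x hx]
        simp only [norm_zero, mul_zero]
        exact mul_nonneg (add_nonneg ENNReal.toReal_nonneg zero_le_one) (norm_nonneg _)
    have memwF : ∀ n, MemLp (fun x => w x * F n (φ x)) 2 μ := by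
      intro n
      refine AluthgeAux.mem_of ((hw.mul ((hFmeas n).comp hφ)).aestronglyMeasurable) ?_
      have hcv := AluthgeAux.cv μ hw hφ habs
        (g := fun y => (‖F n y‖₊ : ℝ≥0∞) ^ 2)
        (((hFmeas n).nnnorm.coe_nnreal_ennreal).pow_const 2)
      calc ∫⁻ x, (‖w x * F n (φ x)‖₊ : ℝ≥0∞) ^ 2 ∂μ
          = ∫⁻ x, (‖w x‖₊ : ℝ≥0∞) ^ 2 * (‖F n (φ x)‖₊ : ℝ≥0∞) ^ 2 ∂μ := by
            simp_rw [nnnorm_mul, ENNReal.coe_mul, mul_pow]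
        _ = ∫⁻ y, wcDeriv μ w φ y * (‖F n y‖₊ : ℝ≥0∞) ^ 2 ∂μ := hcv
        _ ≤ ∫⁻ y, ((n : ℝ≥0∞) + 1) * (‖f' y‖₊ : ℝ≥0∞) ^ 2 ∂μ := by
            refine lintegral_mono fun y => ?_
            by_cases hy : y ∈ E n
            · rw [hFf' n y hy]
              rcases (hEmem n y).1 hy with h0 | ⟨-, hle⟩
              · rw [h0, zero_mul]; exact zero_le
              · exact mul_le_mul_left hle _
            · rw [hFz n y hy]
              simp
        _ = ((n : ℝ≥0∞) + 1) * ∫⁻ y, (‖f' y‖₊ : ℝ≥0∞) ^ 2 ∂μ :=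
            lintegral_const_mul _ ((hf'meas.nnnorm.coe_nnreal_ennreal).pow_const 2)
        _ < ∞ := ENNReal.mul_lt_top
            (by simp [ENNReal.add_ne_top])
            (AluthgeAux.lint_lt_top hf'L)
    have hTmeas : Measurable (wcTilde μ w φ) := by
      unfold wcTilde
      exact hw.mul (Complex.measurable_ofReal.comp
        (((H.comp hφ).pow_const _).ennreal_toReal))
    have mem3 : ∀ n, MemLp (fun x =>
        wcTilde μ w φ x * ((wcDeriv μ w φ (φ x) ^ ((1-α)/2)).toReal : ℂ) * F n (φ x)) 2 μ := by
      intro n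
      refine MemLp.of_le_mul (c := (((n : ℝ≥0∞) + 1) ^ (α/2)).toReal) (memwF n)
        (((hTmeas.mul (Complex.measurable_ofReal.comp
            (((H.comp hφ).pow_const _).ennreal_toReal))).mul
          ((hFmeas n).comp hφ)).aestronglyMeasurable)
        (Eventually.of_forall fun x => ?_)
      by_cases hmem : φ x ∈ E n
      · have hD := AluthgeAux2.Dle hα0 hα1 (n := n) (a := wcDeriv μ w φ (φ x))
          (((hEmem n (φ x)).1 hmem).imp id And.left)
        calc ‖wcTilde μ w φ x * ((wcDeriv μ w φ (φ x) ^ ((1-α)/2)).toReal : ℂ) * F n (φ x)‖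
            = ‖w x‖ * ((wcDeriv μ w φ (φ x) ^ (-(1/2) : ℝ)).toReal
                * (wcDeriv μ w φ (φ x) ^ ((1-α)/2)).toReal) * ‖F n (φ x)‖ := by
              simp only [wcTilde, norm_mul, Complex.norm_real, Real.norm_eq_abs,
                abs_of_nonneg ENNReal.toReal_nonneg]
              ring
          _ ≤ ‖w x‖ * (((n : ℝ≥0∞) + 1) ^ (α/2)).toReal * ‖F n (φ x)‖ := by
              have h1 : ‖w x‖ * ((wcDeriv μ w φ (φ x) ^ (-(1/2) : ℝ)).toReal
                  * (wcDeriv μ w φ (φ x) ^ ((1-α)/2)).toReal)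
                  ≤ ‖w x‖ * (((n : ℝ≥0∞) + 1) ^ (α/2)).toReal :=
                mul_le_mul_of_nonneg_left hD (norm_nonneg (w x))
              exact mul_le_mul_of_nonneg_right h1 (norm_nonneg (F n (φ x)))
          _ = (((n : ℝ≥0∞) + 1) ^ (α/2)).toReal * ‖w x * F n (φ x)‖ := by
              rw [norm_mul]; ring
      · rw [hFz n (φ x) hmem]
        simp only [mul_zero, norm_zero]
        positivity
    have memα : ∀ n, MemLp (fun x => wcAlpha μ w φ α x * F n (φ x)) 2 μ := by
      intro n
      refine MemLp.of_le_mul (c := 1) hfαL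
        ((hαmeas.mul ((hFmeas n).comp hφ)).aestronglyMeasurable) ?_
      filter_upwards [AluthgeAux.key_ae μ hw hφ habs hff'] with x hx
      rcases hx with hwx | hfx
      · have h0 : wcAlpha μ w φ α x = 0 := by simp [wcAlpha, hwx]
        simp [h0]
      · by_cases hmem : φ x ∈ E n
        · rw [hFf' n (φ x) hmem, ← hfx, one_mul]
        · rw [hFz n (φ x) hmem]
          simp only [mul_zero, norm_zero, one_mul]
          exact norm_nonneg _
    have mem4 : ∀ n, MemLp (aluthgeFun μ w φ α (F n)) 2 μ := fun n =>
      MemLp.ae_eq (heqf (F n)).symm (memα n)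
    refine ⟨F, fun n => ?_, ?_, ?_⟩
    · simp only [aluthgeDom]
      exact ⟨mem1 n, mem2 n, mem3 n, mem4 n⟩
    · refine AluthgeAux2.tendsto_eLpNorm_zero
        (fun n => ((hFmeas n).aestronglyMeasurable).sub hfL.1)
        (fun x => (‖f x‖₊ : ℝ≥0∞) ^ 2)
        (AluthgeAux.lint_lt_top hfL).ne (fun n => ?_) ?_
      · filter_upwards [hff'] with x hfx
        by_cases hx : x ∈ E n
        · rw [hFf' n x hx, ← hfx]
          simp
        · rw [hFz n x hx]
          simp
      · filter_upwards [hfin, hff'] with x hx1 hx2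
        have hev : ∀ᶠ n in atTop, F n x - f x = 0 :=
          (evE x hx1.ne).mono fun n hn => by rw [hFf' n x hn, ← hx2, sub_self]
        exact (Filter.tendsto_congr' hev).2 tendsto_const_nhds
    · refine AluthgeAux2.tendsto_eLpNorm_zero
        (fun n => ((hαmeas.mul ((hFmeas n).comp hφ)).aestronglyMeasurable).sub hfαL.1)
        (fun x => (‖wcAlpha μ w φ α x * f (φ x)‖₊ : ℝ≥0∞) ^ 2)
        (AluthgeAux.lint_lt_top hfαL).ne (fun n => ?_) ?_
      · filter_upwards [AluthgeAux.key_ae μ hw hφ habs hff'] with x hx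
        rcases hx with hwx | hfx
        · have h0 : wcAlpha μ w φ α x = 0 := by simp [wcAlpha, hwx]
          simp [h0]
        · by_cases hmem : φ x ∈ E n
          · rw [hFf' n (φ x) hmem, ← hfx]
            simp
          · rw [hFz n (φ x) hmem]
            simp
      · filter_upwards [hfin, AluthgeAux.key_ae μ hw hφ habs hff'] with x hx1 hx2
        rcases hx2 with hwx | hfx
        · have h0 : wcAlpha μ w φ α x = 0 := by simp [wcAlpha, hwx]
          simp only [h0, zero_mul, sub_self]
          exact tendsto_const_nhds
        · by_cases htop : wcDeriv μ w φ (φ x) = ∞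
          · have h0 : wcAlpha μ w φ α x = 0 := by
              simp only [wcAlpha, htop, ENNReal.div_top,
                ENNReal.zero_rpow_of_pos (by linarith : (0:ℝ) < α/2), ENNReal.toReal_zero,
                Complex.ofReal_zero, mul_zero]
            simp only [h0, zero_mul, sub_self]
            exact tendsto_const_nhds
          · have hev : ∀ᶠ n in atTop,
                wcAlpha μ w φ α x * F n (φ x) - wcAlpha μ w φ α x * f (φ x) = 0 :=
              (evE (φ x) htop).mono fun n hn => by rw [hFf' n (φ x) hn, ← hfx, sub_self]
            exact (Filter.tendsto_congr' hev).2 tendsto_const_nhds
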